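/- Let k, N ≥ 1 and let 0 = c_0 < c_1 < ⋯ < c_n = k; set C_t = {c_{t−1}+1, …, c_t}. For each t let π_t be a partition of C_t; let π be the partition of [k] defined by i ~π j iff i and j lie in the same C_t and i ~π_t j, and let τ be the partition of [k] whose classes are C_1, …, C_n. Let x = (x_{i,j}), i ∈ [k], j ∈ [N], be a family of elements of a unital (not necessarily commutative) ring. Then ∏_{t=1}^n St_{π_t}(x|_{C_t}) = Σ_{σ a partition of [k] with σ ∧ τ = π} St_σ(x), where the product is taken in increasing order of t and σ ∧ τ denotes the meet: i ~σ∧τ j iff i ~σ j and i ~τ j. -/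

import Mathlib

open scoped Classical

noncomputable section FreeStochasticMeasures

/-! ## Partitions of `Fin k` as setoids -/

instance setoidFinFinite (k : ℕ) : Finite (Setoid (Fin k)) :=
  Finite.of_injective (fun π : Setoid (Fin k) => (π.r : Fin k → Fin k → Prop))
    (fun _ _ hab => Setoid.ext fun x y => iff_of_eq (congrFun (congrFun hab x) y))

instance setoidFinFintype (k : ℕ) : Fintype (Setoid (Fin k)) := Fintype.ofFinite _

/-- The classes of a partition of `Fin k`, as a finset of finsets. -/
def classesF {k : ℕ} (π : Setoid (Fin k)) : Finset (Finset (Fin k)) :=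
  Finset.univ.image fun i => Finset.univ.filter fun j => π.r i j

/-- A partition `π` of `Fin k` is noncrossing: there are no `i < j < l < m` with
`i ~π l`, `j ~π m` and `¬ i ~π j`. -/
def IsNC {k : ℕ} (π : Setoid (Fin k)) : Prop :=
  ∀ i j l m : Fin k, i < j → j < l → l < m → π.r i l → π.r j m → π.r i j

/-- `B` is a class of the partition `π`. -/
def IsClass {k : ℕ} (π : Setoid (Fin k)) (B : Finset (Fin k)) : Prop :=
  B ∈ classesF π

/-- `B` is an inner class of `π`: it is covered by some other class. -/
def IsInnerClass {k : ℕ} (π : Setoid (Fin k)) (B : Finset (Fin k)) : Prop :=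
  IsClass π B ∧ ∃ B' : Finset (Fin k), IsClass π B' ∧ B' ≠ B ∧
    ∃ a ∈ B', ∃ b ∈ B', ∀ c ∈ B, a < c ∧ c < b

/-- `B` is an outer class of `π`: a class which is not inner. -/
def IsOuterClass {k : ℕ} (π : Setoid (Fin k)) (B : Finset (Fin k)) : Prop :=
  IsClass π B ∧ ¬ IsInnerClass π B

/-- `Bf` enumerates the finsets satisfying `P` (e.g. the outer classes of a partition),
listed in increasing order of minimal elements. -/
def ClassEnum {k o : ℕ} (P : Finset (Fin k) → Prop) (Bf : Fin o → Finset (Fin k)) : Prop :=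
  (∀ i, P (Bf i)) ∧ (∀ B, P B → ∃ i, Bf i = B) ∧
    ∀ i j : Fin o, i < j → ∃ a ∈ Bf i, ∀ b ∈ Bf j, a < b

/-- The closure of a class: all indices lying between two of its elements. -/
def closureF {k : ℕ} (B : Finset (Fin k)) : Finset (Fin k) :=
  Finset.univ.filter fun j => ∃ a ∈ B, ∃ b ∈ B, a ≤ j ∧ j ≤ b

/-- Restriction of a partition of `Fin k` to a subset `C`, transported to `Fin C.card`
along the unique order isomorphism. -/
def restrictS {k : ℕ} (π : Setoid (Fin k)) (C : Finset (Fin k)) : Setoid (Fin C.card) :=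
  Setoid.comap (fun i => (C.orderIsoOfFin rfl i).1) π

/-- `μ` is the Möbius function of the poset `NC(k)` of noncrossing partitions of `Fin k`:
determined by `μ σ σ = 1` and the vanishing of the sums over intervals. -/
def IsNCMobius (k : ℕ) (μ : Setoid (Fin k) → Setoid (Fin k) → ℤ) : Prop :=
  (∀ σ : Setoid (Fin k), IsNC σ → μ σ σ = 1) ∧
    ∀ σ π : Setoid (Fin k), IsNC σ → IsNC π → σ < π →
      (∑ ρ ∈ Finset.univ.filter (fun ρ : Setoid (Fin k) => IsNC ρ ∧ σ ≤ ρ ∧ ρ ≤ π), μ σ ρ) = 0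

/-- `μ` is the Möbius function of the lattice of all partitions of `Fin k`. -/
def IsPMobius (k : ℕ) (μ : Setoid (Fin k) → Setoid (Fin k) → ℤ) : Prop :=
  (∀ σ : Setoid (Fin k), μ σ σ = 1) ∧
    ∀ σ π : Setoid (Fin k), σ < π →
      (∑ ρ ∈ Finset.univ.filter (fun ρ : Setoid (Fin k) => σ ≤ ρ ∧ ρ ≤ π), μ σ ρ) = 0

/-! ## Partition-indexed sums in a ring -/

section RingSums

variable {R : Type*} [Ring R]

/-- `St_π(x)`: sum over all `v` inducing exactly the partition `π`. -/
def StSumR {k N : ℕ} (x : Fin k → Fin N → R) (π : Setoid (Fin k)) : R :=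
  ∑ v ∈ Finset.univ.filter (fun v : Fin k → Fin N => ∀ i j, v i = v j ↔ π.r i j),
    (List.ofFn fun i => x i (v i)).prod

/-- `Pr_π(x)`: sum over all `v` constant on the classes of `π`. -/
def PrSumR {k N : ℕ} (x : Fin k → Fin N → R) (π : Setoid (Fin k)) : R :=
  ∑ v ∈ Finset.univ.filter (fun v : Fin k → Fin N => ∀ i j, π.r i j → v i = v j),
    (List.ofFn fun i => x i (v i)).prod

/-- Restriction of the family `x` to the rows indexed by `C`, in increasing order. -/
def restrictT {k N : ℕ} (x : Fin k → Fin N → R) (C : Finset (Fin k)) :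
    Fin C.card → Fin N → R := fun i => x (C.orderIsoOfFin rfl i).1

end RingSums

/-! ## C*-probability spaces, states, free independence -/

variable {A : Type*} [NormedRing A] [StarRing A] [CStarRing A] [NormedAlgebra ℂ A]
  [StarModule ℂ A] [CompleteSpace A]

/-- `φ` is a state: unital and positive. -/
structure IsCState (φ : A →ₗ[ℂ] ℂ) : Prop where
  map_one : φ 1 = 1
  pos : ∀ a : A, 0 ≤ (φ (star a * a)).re ∧ (φ (star a * a)).im = 0

/-- `φ` is a faithful tracial state. -/
structure IsFaithfulTracialState (φ : A →ₗ[ℂ] ℂ) : Prop where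
  map_one : φ 1 = 1
  pos : ∀ a : A, 0 ≤ (φ (star a * a)).re ∧ (φ (star a * a)).im = 0
  tracial : ∀ a b : A, φ (a * b) = φ (b * a)
  faithful : ∀ a : A, φ (star a * a) = 0 → a = 0

/-- Free independence of a family of subsets of `A` with respect to `φ`: alternating products
of centered elements of the generated unital star subalgebras are centered. -/
def FreelyIndependent (φ : A →ₗ[ℂ] ℂ) {ι : Type*} (S : ι → Set A) : Prop :=
  ∀ (m : ℕ) (idx : Fin (m + 1) → ι) (a : Fin (m + 1) → A),
    (∀ t, a t ∈ StarAlgebra.adjoin ℂ (S (idx t))) →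
    (∀ t : Fin m, idx t.castSucc ≠ idx t.succ) →
    (∀ t, φ (a t) = 0) →
    φ (List.ofFn a).prod = 0

/-- Free independence of two sets. -/
def FreelyIndependentPair (φ : A →ₗ[ℂ] ℂ) (S T : Set A) : Prop :=
  FreelyIndependent φ (fun b : Bool => cond b S T)

/-- A standard semicircular element. -/
def IsStdSemicircular (φ : A →ₗ[ℂ] ℂ) (s : A) : Prop :=
  star s = s ∧ (∀ m : ℕ, φ (s ^ (2 * m + 1)) = 0) ∧
    ∀ m : ℕ, φ (s ^ (2 * m)) = (catalan m : ℂ)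

/-! ## Moments and free cumulants -/

/-- The moment of the subfamily of `a` indexed by `B`, in increasing order. -/
def Mom {k : ℕ} (φ : A →ₗ[ℂ] ℂ) (a : Fin k → A) (B : Finset (Fin k)) : ℂ :=
  φ ((B.sort (· ≤ ·)).map a).prod

/-- `M_π(a)`: product of the moments over the classes of `π`. -/
def MomPi {k : ℕ} (φ : A →ₗ[ℂ] ℂ) (a : Fin k → A) (π : Setoid (Fin k)) : ℂ :=
  ∏ B ∈ classesF π, Mom φ a B

/-- `R_π(a)`: the free cumulant functional, via Möbius inversion over `NC(k)`
(`μ` is the Möbius function of `NC(k)`). -/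
def Rpi {k : ℕ} (φ : A →ₗ[ℂ] ℂ) (μ : Setoid (Fin k) → Setoid (Fin k) → ℤ)
    (a : Fin k → A) (π : Setoid (Fin k)) : ℂ :=
  ∑ σ ∈ Finset.univ.filter (fun σ : Setoid (Fin k) => IsNC σ ∧ σ ≤ π),
    (μ σ π : ℂ) * MomPi φ a σ

/-- `R(a_1, …, a_k)`: the free cumulant for the one-class partition. -/
def Rfull {k : ℕ} (φ : A →ₗ[ℂ] ℂ) (μ : Setoid (Fin k) → Setoid (Fin k) → ℤ)
    (a : Fin k → A) : ℂ :=
  Rpi φ μ a ⊤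

/-- The subfamily of operators indexed by `B`, in increasing order. -/
def subArgs {k : ℕ} (a : Fin k → A) (B : Finset (Fin k)) : Fin B.card → A :=
  fun i => a (B.orderIsoOfFin rfl i).1

/-! ## Half-open subintervals of `[0,1)` and subdivisions -/

/-- A half-open interval `[lo, hi) ⊆ [0,1)`. -/
structure HIv : Type where
  lo : ℝ
  hi : ℝ
  lo_nonneg : 0 ≤ lo
  lo_le_hi : lo ≤ hi
  hi_le_one : hi ≤ 1

namespace HIv

/-- The length of a half-open interval. -/
def len (I : HIv) : ℝ := I.hi - I.lo

/-- A half-open interval as a set of reals. -/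
def set (I : HIv) : Set ℝ := Set.Ico I.lo I.hi

end HIv

/-- The interval `[0,1)`. -/
def unitIv : HIv := ⟨0, 1, le_refl 0, zero_le_one, le_refl 1⟩

/-- A subdivision of the half-open interval `I` into finitely many half-open intervals,
listed in increasing order, recorded by its strictly increasing sequence of cut points. -/
structure SubdivOf (I : HIv) : Type where
  n : ℕ
  c : Fin (n + 1) → ℝ
  mono : StrictMono c
  first : c 0 = I.lo
  last : c (Fin.last n) = I.hi

namespace SubdivOf

/-- The `j`-th interval of a subdivision. -/
def piece {I : HIv} (S : SubdivOf I) (j : Fin S.n) : HIv where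
  lo := S.c j.castSucc
  hi := S.c j.succ
  lo_nonneg := by
    have h0 : S.c 0 ≤ S.c j.castSucc := S.mono.monotone (Fin.zero_le _)
    have h1 := I.lo_nonneg
    rw [S.first] at h0; linarith
  lo_le_hi := le_of_lt (S.mono (Fin.castSucc_lt_succ : j.castSucc < j.succ))
  hi_le_one := by
    have h0 : S.c j.succ ≤ S.c (Fin.last S.n) := S.mono.monotone (Fin.le_last _)
    have h1 := I.hi_le_one
    rw [S.last] at h0; linarith

/-- The mesh of the subdivision is `< δ`: every piece has length `< δ`. -/
def MeshLT {I : HIv} (S : SubdivOf I) (δ : ℝ) : Prop :=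
  ∀ j : Fin S.n, (S.piece j).len < δ

end SubdivOf

/-- `L` is the operator-norm limit of `F` along the net of subdivisions of `I`
(as the mesh tends to `0`). -/
def IsSubdivLimit {I : HIv} (F : SubdivOf I → A) (L : A) : Prop :=
  ∀ ε : ℝ, 0 < ε → ∃ δ : ℝ, 0 < δ ∧ ∀ S : SubdivOf I, S.MeshLT δ → ‖F S - L‖ < ε

/-! ## Free stochastic measures -/

/-- A free stochastic measure on `(A, φ)`: a self-adjoint, uniformly bounded, additive,
stationary, continuous interval function with freely independent values on disjoint
intervals. -/
structure FSM (A : Type*) [NormedRing A] [StarRing A] [CStarRing A] [NormedAlgebra ℂ A]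
    [StarModule ℂ A] [CompleteSpace A] (φ : A →ₗ[ℂ] ℂ) : Type _ where
  val : HIv → A
  sa : ∀ I, star (val I) = val I
  bdd : ∃ C : ℝ, ∀ I, ‖val I‖ ≤ C
  add : ∀ I J K : HIv, I.hi = J.lo → K.lo = I.lo → K.hi = J.hi → val K = val I + val J
  free : ∀ {n : ℕ} (Iv : Fin n → HIv),
    (∀ i j, i ≠ j → Disjoint (Iv i).set (Iv j).set) →
    FreelyIndependent φ fun i => ({val (Iv i)} : Set A)
  stat : ∀ (m : ℕ) (I J : HIv), I.len = J.len → φ (val I ^ m) = φ (val J ^ m)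
  cont : ∀ (m : ℕ) (I : HIv) (ε : ℝ), 0 < ε → ∃ δ : ℝ, 0 < δ ∧
    ∀ J : HIv, |J.len - I.len| < δ → ‖φ (val J ^ m) - φ (val I ^ m)‖ < ε

/-- A `k`-tuple of free stochastic measures is consistent: joint free increments,
joint stationarity, and joint continuity. -/
def Consistent {k : ℕ} (φ : A →ₗ[ℂ] ℂ) (X : Fin k → FSM A φ) : Prop :=
  (∀ (n : ℕ) (u : Fin n → Fin k) (Iv : Fin n → HIv),
      (∀ i j, i ≠ j → Disjoint (Iv i).set (Iv j).set) →
      FreelyIndependent φ fun i => ({(X (u i)).val (Iv i)} : Set A)) ∧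
  (∀ (n : ℕ) (u : Fin n → Fin k) (I J : HIv), I.len = J.len →
      φ (List.ofFn fun i => (X (u i)).val I).prod
        = φ (List.ofFn fun i => (X (u i)).val J).prod) ∧
  (∀ (n : ℕ) (u : Fin n → Fin k) (I : HIv) (ε : ℝ), 0 < ε → ∃ δ : ℝ, 0 < δ ∧
      ∀ J : HIv, |J.len - I.len| < δ →
        ‖φ (List.ofFn fun i => (X (u i)).val J).prod
          - φ (List.ofFn fun i => (X (u i)).val I).prod‖ < ε)

/-! ## Riemann-type sums for stochastic measures -/

/-- `St_π(X, S)`: sum over multi-indices inducing exactly the partition `π`. -/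
def StSum {k : ℕ} (Xv : Fin k → HIv → A) (π : Setoid (Fin k)) {I : HIv}
    (S : SubdivOf I) : A :=
  ∑ v ∈ Finset.univ.filter (fun v : Fin k → Fin S.n => ∀ i j, v i = v j ↔ π.r i j),
    (List.ofFn fun i => Xv i (S.piece (v i))).prod

/-- `Pr_π(X, S)`: sum over multi-indices constant on the classes of `π`. -/
def PrSum {k : ℕ} (Xv : Fin k → HIv → A) (π : Setoid (Fin k)) {I : HIv}
    (S : SubdivOf I) : A :=
  ∑ v ∈ Finset.univ.filter (fun v : Fin k → Fin S.n => ∀ i j, π.r i j → v i = v j),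
    (List.ofFn fun i => Xv i (S.piece (v i))).prod

/-- The diagonal Riemann sum `Σ_j X^{(1)}(I_j) ⋯ X^{(k)}(I_j)`. -/
def diagSum {k : ℕ} (Xv : Fin k → HIv → A) {I : HIv} (S : SubdivOf I) : A :=
  ∑ j : Fin S.n, (List.ofFn fun i => Xv i (S.piece j)).prod

/-- The sub-tuple of interval functions indexed by `B`, in increasing order. -/
def subTupleV {k : ℕ} (Xv : Fin k → HIv → A) (B : Finset (Fin k)) :
    Fin B.card → HIv → A := fun i => Xv (B.orderIsoOfFin rfl i).1

/-- The alternating product `p Z_1 p Z_2 p ⋯ Z_k p`. -/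
def altProd {k : ℕ} (p : A) (Z : Fin k → A) : A :=
  p * (List.ofFn fun j => Z j * p).prod

/-- Lengths of the intersection `∩_{i ∈ G} I_i` of half-open intervals. -/
def interLen {n : ℕ} (Iv : Fin n → HIv) (G : Finset (Fin n)) : ℝ :=
  if h : G.Nonempty then
    max 0 ((G.inf' h fun i => (Iv i).hi) - (G.sup' h fun i => (Iv i).lo))
  else 0

/-- A free Poisson stochastic measure: all free cumulants of `Y(I)` equal `|I|`
(`μ` is a family of Möbius functions of the posets `NC(n)`). -/
def IsFreePoisson (φ : A →ₗ[ℂ] ℂ) (Y : FSM A φ)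
    (μ : (n : ℕ) → Setoid (Fin n) → Setoid (Fin n) → ℤ) : Prop :=
  ∀ n : ℕ, 1 ≤ n → ∀ I : HIv, Rfull φ (μ n) (fun _ : Fin n => Y.val I) = (I.len : ℂ)

end FreeStochasticMeasures

/-! ### Auxiliary machinery for `prod_stsum_blocks` -/

section ProdStSumAux

private lemma flatNat : ∀ (n : ℕ) {α : Type*} (l : List α) (f : α → ℕ),
    (∀ a ∈ l, f a < n) → l.Pairwise (fun a c => f a ≤ f c) →
    (List.range n).flatMap (fun m => l.filter fun a => f a = m) = l := by
  intro n
  induction n with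
  | zero =>
    intro α l f hb _
    have hl : l = [] := by
      cases l with
      | nil => rfl
      | cons a t => exact absurd (hb a List.mem_cons_self) (by omega)
    subst hl
    simp
  | succ n ih =>
    intro α l f hb hp
    have h₂ : ∀ a ∈ l.dropWhile (fun a => f a = 0), f a ≠ 0 := by
      clear hb ih
      induction l with
      | nil => simp
      | cons hd tl ihl =>
        rw [List.pairwise_cons] at hp
        by_cases h0 : f hd = 0
        · rw [List.dropWhile_cons_of_pos (by simpa using h0)]
          exact ihl hp.2
        · rw [List.dropWhile_cons_of_neg (by simpa using h0)]
          intro a ha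
          rcases List.mem_cons.mp ha with rfl | ha
          · exact h0
          · have := hp.1 a ha; omega
    have h₁ : ∀ a ∈ l.takeWhile (fun a => f a = 0), f a = 0 := fun a ha => by
      simpa using List.mem_takeWhile_imp ha
    have hmem₂ : ∀ a ∈ l.dropWhile (fun a => f a = 0), a ∈ l :=
      fun a ha => (List.dropWhile_sublist _).subset ha
    have hp₂ : (l.dropWhile (fun a => f a = 0)).Pairwise (fun a c => f a ≤ f c) :=
      List.Pairwise.sublist (List.dropWhile_sublist _) hp
    rw [List.range_succ_eq_map, List.flatMap_cons, List.flatMap_map]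
    have e0 : l.filter (fun a => f a = 0) = l.takeWhile (fun a => f a = 0) := by
      conv_lhs => rw [← List.takeWhile_append_dropWhile (p := fun a => decide (f a = 0)) (l := l)]
      rw [List.filter_append, List.filter_eq_self.mpr (fun a ha => by simpa using h₁ a ha),
        List.filter_eq_nil_iff.mpr (fun a ha => by simpa using h₂ a ha), List.append_nil]
    have es : ∀ m : ℕ, l.filter (fun a => f a = m + 1)
        = (l.dropWhile (fun a => f a = 0)).filter (fun a => f a - 1 = m) := by
      intro m
      conv_lhs => rw [← List.takeWhile_append_dropWhile (p := fun a => decide (f a = 0)) (l := l)]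
      rw [List.filter_append, List.filter_eq_nil_iff.mpr (fun a ha => by
        have := h₁ a ha; simp only [decide_eq_true_eq]; omega), List.nil_append]
      exact List.filter_congr (fun a ha => by
        have := h₂ a ha
        simp only [decide_eq_decide]
        omega)
    have hstep : (List.range n).flatMap (fun m => l.filter fun a => f a = m + 1)
        = (List.range n).flatMap (fun m =>
            (l.dropWhile (fun a => f a = 0)).filter fun a => f a - 1 = m) := by
      simp only [es]
    have hfin : (List.range n).flatMap (fun m =>
        (l.dropWhile (fun a => f a = 0)).filter fun a => f a - 1 = m)
          = l.dropWhile (fun a => f a = 0) := by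
      refine ih _ (fun a => f a - 1) (fun a ha => ?_)
        (hp₂.imp fun h => Nat.sub_le_sub_right h 1)
      have h1 := hb a (hmem₂ a ha)
      have h2 := h₂ a ha
      show f a - 1 < n
      omega
    calc (l.filter fun a => f a = 0)
          ++ (List.range n).flatMap (fun m => l.filter fun a => f a = m + 1)
        = l.takeWhile (fun a => f a = 0) ++ l.dropWhile (fun a => f a = 0) := by
          rw [e0, hstep, hfin]
      _ = l := List.takeWhile_append_dropWhile

private lemma flatFin {n : ℕ} {α : Type*} (l : List α) (f : α → Fin n)
    (hp : l.Pairwise (fun a c => f a ≤ f c)) :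
    (List.finRange n).flatMap (fun t => l.filter fun a => f a = t) = l := by
  have h := flatNat n l (fun a => (f a : ℕ)) (fun a _ => (f a).isLt)
    (hp.imp fun h => h)
  calc (List.finRange n).flatMap (fun t => l.filter fun a => f a = t)
      = (List.finRange n).flatMap (fun t : Fin n => l.filter fun a => (f a : ℕ) = (t : ℕ)) := by
        refine congrArg (fun F => (List.finRange n).flatMap F) (funext fun t => List.filter_congr fun a _ => ?_)
        exact decide_eq_decide.mpr ⟨fun h' => by rw [h'], fun h' => Fin.ext h'⟩
    _ = ((List.finRange n).map Fin.val).flatMap (fun m => l.filter fun a => (f a : ℕ) = m) := by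
        rw [List.flatMap_map]
    _ = (List.range n).flatMap (fun m => l.filter fun a => (f a : ℕ) = m) := by
        rw [show (List.finRange n).map Fin.val = List.range n from
          List.ext_getElem (by simp) (fun i _ _ => by simp)]
    _ = l := h

private def Cb {k n : ℕ} (b : Fin k → Fin n) (t : Fin n) : Finset (Fin k) :=
  Finset.univ.filter fun i => b i = t

private lemma mem_Cb {k n : ℕ} {b : Fin k → Fin n} {t : Fin n} {i : Fin k} :
    i ∈ Cb b t ↔ b i = t := by simp [Cb]

private def iotaB {k n : ℕ} (b : Fin k → Fin n) (t : Fin n) (j : Fin ((Cb b t).card)) :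
    Fin k :=
  ((Cb b t).orderIsoOfFin rfl j).1

private lemma b_iotaB {k n : ℕ} (b : Fin k → Fin n) (t : Fin n) (j : Fin ((Cb b t).card)) :
    b (iotaB b t j) = t :=
  mem_Cb.mp ((Cb b t).orderIsoOfFin rfl j).2

private lemma sortCb {k n : ℕ} (b : Fin k → Fin n) (t : Fin n) :
    (Cb b t).sort (· ≤ ·) = (List.finRange k).filter (fun i => b i = t) := by
  refine List.Perm.eq_of_pairwise' (Finset.pairwise_sort _ _)
    (List.Pairwise.filter _ (List.pairwise_le_finRange k)) ?_
  refine List.perm_of_nodup_nodup_toFinset_eq (Finset.sort_nodup _ _)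
    ((List.nodup_finRange k).filter _) ?_
  ext i
  simp [Finset.mem_sort, mem_Cb]

private lemma ofFnBlock {k n : ℕ} (b : Fin k → Fin n) {β : Type*} (F : Fin k → β)
    (t : Fin n) :
    List.ofFn (fun j => F (iotaB b t j)) = ((Cb b t).sort (· ≤ ·)).map F := by
  refine List.ext_getElem (by simp) fun i h1 h2 => ?_
  simp only [List.getElem_ofFn, List.getElem_map]
  rfl

private lemma joinBlocks {k n : ℕ} (b : Fin k → Fin n) (hmono : Monotone b)
    {M : Type*} [Monoid M] (F : Fin k → M) :
    (List.ofFn fun t : Fin n => (List.ofFn fun j => F (iotaB b t j)).prod).prod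
      = (List.ofFn F).prod := by
  have h1 : ∀ t : Fin n, List.ofFn (fun j => F (iotaB b t j))
      = ((List.finRange k).filter (fun i => b i = t)).map F := fun t => by
    rw [ofFnBlock, sortCb]
  have hpair : (List.finRange k).Pairwise (fun a c => b a ≤ b c) :=
    (List.pairwise_lt_finRange k).imp fun h => hmono h.le
  symm
  calc (List.ofFn F).prod
      = ((List.finRange k).map F).prod := by rw [List.ofFn_eq_map]
    _ = (((List.finRange n).flatMap (fun t => (List.finRange k).filter
          (fun i => b i = t))).map F).prod := by rw [flatFin _ b hpair]
    _ = ((List.finRange n).flatMap (fun t => ((List.finRange k).filter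
          (fun i => b i = t)).map F)).prod := by rw [List.map_flatMap]
    _ = (((List.finRange n).map (fun t => ((List.finRange k).filter
          (fun i => b i = t)).map F)).flatten).prod := by rw [List.flatMap_def]
    _ = ((List.finRange n).map (fun t => (((List.finRange k).filter
          (fun i => b i = t)).map F).prod)).prod := by
        rw [List.prod_flatten, List.map_map]; rfl
    _ = (List.ofFn fun t : Fin n => (List.ofFn fun j => F (iotaB b t j)).prod).prod := by
        simp only [h1]
        rw [List.ofFn_eq_map]

private lemma sum_piFinset_succ {n : ℕ} {δ : Fin (n + 1) → Type*} {M : Type*}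
    [AddCommMonoid M] (S : ∀ t, Finset (δ t)) (H : (∀ t, δ t) → M) :
    ∑ g ∈ Fintype.piFinset S, H g
      = ∑ p ∈ (S 0) ×ˢ Fintype.piFinset (fun t : Fin n => S t.succ),
          H (Fin.cons p.1 p.2) := by
  refine Finset.sum_bij' (fun g _ => (g 0, fun t => g t.succ))
    (fun p _ => Fin.cons p.1 p.2) ?_ ?_ ?_ ?_ ?_
  · intro g hg
    rw [Fintype.mem_piFinset] at hg
    exact Finset.mem_product.mpr ⟨hg 0, Fintype.mem_piFinset.mpr fun t => hg t.succ⟩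
  · intro p hp
    rw [Finset.mem_product] at hp
    refine Fintype.mem_piFinset.mpr fun t => ?_
    refine Fin.cases ?_ ?_ t
    · simpa using hp.1
    · intro t'
      simpa using Fintype.mem_piFinset.mp hp.2 t'
  · intro g _
    exact Fin.cons_self_tail g
  · intro p _
    refine Prod.ext ?_ ?_
    · simp
    · funext t; simp
  · intro g _
    exact (congrArg H (Fin.cons_self_tail g)).symm

private lemma prod_ofFn_sum {R : Type*} [NonAssocSemiring R] :
    ∀ {n : ℕ} {δ : Fin n → Type*} (S : ∀ t, Finset (δ t)) (f : ∀ t, δ t → R),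
      (List.ofFn fun t => ∑ w ∈ S t, f t w).prod
        = ∑ g ∈ Fintype.piFinset S, (List.ofFn fun t => f t (g t)).prod := by
  intro n
  induction n with
  | zero =>
    intro δ S f
    simp only [List.ofFn_zero, List.prod_nil, Finset.sum_const, nsmul_eq_mul, mul_one]
    rw [Fintype.card_piFinset]
    simp
  | succ n ih =>
    intro δ S f
    simp only [List.ofFn_succ, List.prod_cons]
    rw [ih (fun t => S t.succ) (fun t w => f t.succ w), Finset.sum_mul_sum,
      sum_piFinset_succ S, Finset.sum_product]
    refine Finset.sum_congr rfl fun a _ => Finset.sum_congr rfl fun g _ => ?_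
    simp [Fin.cons_zero, Fin.cons_succ]

end ProdStSumAux
/-- For consecutive blocks `C_1, …, C_n` of `[k]` (encoded by a monotone surjection
`b : Fin k → Fin n`) and a partition `π` refining the block partition `τ = ker b`,
`∏_t St_{π_t}(x|_{C_t}) = Σ_{σ ∧ τ = π} St_σ(x)`. -/
theorem prod_stsum_blocks
    {R : Type*} [Ring R] (k N n : ℕ) (hk : 1 ≤ k) (hN : 1 ≤ N)
    (b : Fin k → Fin n) (hmono : Monotone b) (hsurj : Function.Surjective b)
    (π : Setoid (Fin k)) (hπτ : π ≤ Setoid.ker b)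
    (x : Fin k → Fin N → R) :
    (List.ofFn fun t : Fin n =>
        StSumR (restrictT x (Finset.univ.filter fun i => b i = t))
          (restrictS π (Finset.univ.filter fun i => b i = t))).prod
      = ∑ σ ∈ Finset.univ.filter
            (fun σ : Setoid (Fin k) => σ ⊓ Setoid.ker b = π),
          StSumR x σ := by
  classical
  -- Step 1: block sums in concrete form
  have hblock : ∀ t : Fin n,
      StSumR (restrictT x (Finset.univ.filter fun i => b i = t))
          (restrictS π (Finset.univ.filter fun i => b i = t))
        = ∑ w ∈ (Finset.univ.filter fun w : Fin ((Cb b t).card) → Fin N =>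
              ∀ a c, w a = w c ↔ π.r (iotaB b t a) (iotaB b t c)),
            (List.ofFn fun j => x (iotaB b t j) (w j)).prod := fun t => rfl
  simp only [hblock]
  rw [prod_ofFn_sum
    (fun t : Fin n => (Finset.univ.filter fun w : Fin ((Cb b t).card) → Fin N =>
      ∀ a c, w a = w c ↔ π.r (iotaB b t a) (iotaB b t c)))
    (fun t w => (List.ofFn fun j => x (iotaB b t j) (w j)).prod)]
  -- Step 2: rewrite the right-hand side fiberwise
  have hker : ∀ σ : Setoid (Fin k), StSumR x σ
      = ∑ v ∈ Finset.univ.filter (fun v : Fin k → Fin N => Setoid.ker v = σ),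
          (List.ofFn fun i => x i (v i)).prod := by
    intro σ
    refine Finset.sum_congr (Finset.filter_congr fun v _ => ?_) fun _ _ => rfl
    constructor
    · intro h
      exact Setoid.ext fun a c => Setoid.ker_def.trans (h a c)
    · intro h i j
      rw [← h]
      exact Setoid.ker_def.symm
  simp only [hker]
  rw [Finset.sum_fiberwise_eq_sum_filter Finset.univ
    (Finset.univ.filter (fun σ : Setoid (Fin k) => σ ⊓ Setoid.ker b = π))
    (fun v : Fin k → Fin N => Setoid.ker v)
    (fun v : Fin k → Fin N => (List.ofFn fun i => x i (v i)).prod)]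
  have hinf : ∀ (v : Fin k → Fin N) (i j : Fin k),
      (Setoid.ker v ⊓ Setoid.ker b).r i j ↔ (v i = v j ∧ b i = b j) := fun v i j =>
    Setoid.inf_iff_and.trans (and_congr Setoid.ker_def Setoid.ker_def)
  have hT : Finset.univ.filter (fun v : Fin k → Fin N =>
        Setoid.ker v ∈ Finset.univ.filter
          (fun σ : Setoid (Fin k) => σ ⊓ Setoid.ker b = π))
      = Finset.univ.filter (fun v : Fin k → Fin N =>
          ∀ i j, b i = b j → (v i = v j ↔ π.r i j)) := by
    refine Finset.filter_congr fun v _ => ?_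
    simp only [Finset.mem_filter, Finset.mem_univ, true_and]
    constructor
    · intro h i j hb'
      constructor
      · intro hv
        rw [← h]
        exact (hinf v i j).mpr ⟨hv, hb'⟩
      · intro hπ
        have hr : (Setoid.ker v ⊓ Setoid.ker b).r i j := by rw [h]; exact hπ
        exact ((hinf v i j).mp hr).1
    · intro h
      refine Setoid.ext fun a c => ?_
      constructor
      · intro hac
        have h2 := (hinf v a c).mp hac
        exact (h a c h2.2).mp h2.1
      · intro hπ
        have hbc : b a = b c := Setoid.ker_def.mp (Setoid.le_def.mp hπτ hπ)
        exact (hinf v a c).mpr ⟨(h a c hbc).mpr hπ, hbc⟩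
  rw [hT]
  -- Step 3: the bijection between tuples of block multi-indices and admissible
  -- multi-indices
  have hιidx : ∀ (t : Fin n) (i : Fin k) (h : i ∈ Cb b t),
      iotaB b t (((Cb b t).orderIsoOfFin rfl).symm ⟨i, h⟩) = i := by
    intro t i h
    show (((Cb b t).orderIsoOfFin rfl) (((Cb b t).orderIsoOfFin rfl).symm ⟨i, h⟩)).1 = i
    rw [OrderIso.apply_symm_apply]
  have phi_eq : ∀ (g : ∀ t : Fin n, Fin ((Cb b t).card) → Fin N) (i : Fin k) (t : Fin n)
      (h : b i = t),
      g (b i) (((Cb b (b i)).orderIsoOfFin rfl).symm ⟨i, mem_Cb.mpr rfl⟩)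
        = g t (((Cb b t).orderIsoOfFin rfl).symm ⟨i, mem_Cb.mpr h⟩) := by
    intro g i t h
    subst h
    rfl
  have hgι : ∀ (g : ∀ t : Fin n, Fin ((Cb b t).card) → Fin N) (t : Fin n)
      (j : Fin ((Cb b t).card)),
      g (b (iotaB b t j)) (((Cb b (b (iotaB b t j))).orderIsoOfFin rfl).symm
          ⟨iotaB b t j, mem_Cb.mpr rfl⟩) = g t j := by
    intro g t j
    rw [phi_eq g (iotaB b t j) t (b_iotaB b t j)]
    congr 1
    rw [show (⟨iotaB b t j, mem_Cb.mpr (b_iotaB b t j)⟩ : {y // y ∈ Cb b t})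
        = (Cb b t).orderIsoOfFin rfl j from Subtype.ext rfl,
      OrderIso.symm_apply_apply]
  refine Finset.sum_bij'
    (fun (g : ∀ t : Fin n, Fin ((Cb b t).card) → Fin N) _ =>
      fun i : Fin k => g (b i) (((Cb b (b i)).orderIsoOfFin rfl).symm ⟨i, mem_Cb.mpr rfl⟩))
    (fun (v : Fin k → Fin N) _ => fun (t : Fin n) (j : Fin ((Cb b t).card)) =>
      v (iotaB b t j)) ?_ ?_ ?_ ?_ ?_
  · intro g hg
    simp only [Finset.mem_filter, Finset.mem_univ, true_and]
    intro i j hb'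
    have hgt := Fintype.mem_piFinset.mp hg (b i)
    simp only [Finset.mem_filter, Finset.mem_univ, true_and] at hgt
    rw [phi_eq g j (b i) hb'.symm]
    have hiff := hgt (((Cb b (b i)).orderIsoOfFin rfl).symm ⟨i, mem_Cb.mpr rfl⟩)
      (((Cb b (b i)).orderIsoOfFin rfl).symm ⟨j, mem_Cb.mpr hb'.symm⟩)
    rwa [hιidx (b i) i (mem_Cb.mpr rfl), hιidx (b i) j (mem_Cb.mpr hb'.symm)] at hiff
  · intro v hv
    simp only [Finset.mem_filter, Finset.mem_univ, true_and] at hv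
    refine Fintype.mem_piFinset.mpr fun t => ?_
    simp only [Finset.mem_filter, Finset.mem_univ, true_and]
    intro a c
    exact hv (iotaB b t a) (iotaB b t c) (by rw [b_iotaB b t a, b_iotaB b t c])
  · intro g _
    funext t j
    exact hgι g t j
  · intro v _
    funext i
    exact congrArg v (hιidx (b i) i (mem_Cb.mpr rfl))
  · intro g _
    show _ = (List.ofFn fun i => x i (g (b i)
      (((Cb b (b i)).orderIsoOfFin rfl).symm ⟨i, mem_Cb.mpr rfl⟩))).prod
    rw [← joinBlocks b hmono (fun i => x i (g (b i)
      (((Cb b (b i)).orderIsoOfFin rfl).symm ⟨i, mem_Cb.mpr rfl⟩)))]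
    refine congrArg List.prod (congrArg List.ofFn (funext fun t =>
      congrArg List.prod (congrArg List.ofFn (funext fun j => ?_))))
    exact congrArg (x (iotaB b t j)) (hgι g t j).symm
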